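/- Let U ⊆ ℝⁿ be a nonempty open set, let g : ℝⁿ → ℝⁿ and h : ℝⁿ → ℝⁿ be arbitrary functions such that for every v ∈ U the vectors v and g(v) are linearly independent, and for each v define f_i(v) := (v i) • g(v) − (g(v) i) • v. If ρ and ρ' in ℝⁿ both satisfy ⟨f_i(v), ρ⟩ = −(h(v) i) and ⟨f_i(v), ρ'⟩ = −(h(v) i) for every v ∈ U and every index i, then ρ = ρ'. (At most one 1-form ρ can solve the compatibility equations over an open set of non-vertically-contact elements; this is the linear-algebra core of the theorem that a non-Riemannian Finsler manifold admits at most one semi-symmetric compatible linear connection.) -/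

import Mathlib

/-- At most one 1-form `ρ` can solve the compatibility equations over a nonempty open set
of non-vertically-contact elements: the linear-algebra core of the unicity of the
semi-symmetric compatible linear connection. -/
theorem rho_unique (n : ℕ) (U : Set (EuclideanSpace ℝ (Fin n))) (hUo : IsOpen U)
    (hne : U.Nonempty)
    (g h : EuclideanSpace ℝ (Fin n) → EuclideanSpace ℝ (Fin n))
    (hind : ∀ v ∈ U, LinearIndependent ℝ ![v, g v])
    (ρ ρ' : EuclideanSpace ℝ (Fin n))
    (hρ : ∀ v ∈ U, ∀ i : Fin n,
      (inner ℝ (v i • g v - g v i • v) ρ : ℝ) = -(h v i))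
    (hρ' : ∀ v ∈ U, ∀ i : Fin n,
      (inner ℝ (v i • g v - g v i • v) ρ' : ℝ) = -(h v i)) :
    ρ = ρ' := by
  set δ := ρ - ρ' with hδ
  -- Step 1: for every v ∈ U, ⟨v, δ⟩ = 0
  have key : ∀ v ∈ U, (inner ℝ v δ : ℝ) = 0 := by
    intro v hv
    have hz : ∀ i : Fin n,
        v i * (inner ℝ (g v) δ : ℝ) - g v i * (inner ℝ v δ : ℝ) = 0 := by
      intro i
      have h1 := hρ v hv i
      have h2 := hρ' v hv i
      have h3 : (inner ℝ (v i • g v - g v i • v) δ : ℝ) = 0 := by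
        rw [hδ, inner_sub_right, h1, h2]; ring
      rw [inner_sub_left, real_inner_smul_left, real_inner_smul_left] at h3
      linarith
    have hvec : (inner ℝ (g v) δ : ℝ) • v + (-(inner ℝ v δ : ℝ)) • g v = 0 := by
      ext i
      have := hz i
      simp only [PiLp.add_apply, PiLp.smul_apply, PiLp.zero_apply, smul_eq_mul,
        neg_mul]
      linarith
    have := (LinearIndependent.pair_iff.mp (hind v hv))
      (inner ℝ (g v) δ : ℝ) (-(inner ℝ v δ : ℝ)) hvec
    linarith [this.2]
  -- Step 2: perturb to conclude δ = 0
  obtain ⟨v₀, hv₀⟩ := hne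
  by_cases hδ0 : δ = 0
  · exact sub_eq_zero.mp hδ0
  · exfalso
    obtain ⟨ε, hε, hball⟩ := Metric.isOpen_iff.mp hUo v₀ hv₀
    have hδn : (0:ℝ) < ‖δ‖ := norm_pos_iff.mpr hδ0
    set t : ℝ := ε / (2 * ‖δ‖) with ht
    have htpos : 0 < t := by positivity
    have hmem : v₀ + t • δ ∈ U := by
      apply hball
      simp only [Metric.mem_ball, dist_eq_norm, add_sub_cancel_left, norm_smul,
        Real.norm_eq_abs, abs_of_pos htpos]
      have heq : ‖δ‖ * (ε / (2 * ‖δ‖)) = ε / 2 := by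
        field_simp
      rw [ht, mul_comm, heq]
      linarith
    have h1 := key v₀ hv₀
    have h2 := key _ hmem
    rw [inner_add_left, real_inner_smul_left, h1, real_inner_self_eq_norm_sq] at h2
    have : ‖δ‖ ^ 2 = 0 := by
      have := mul_eq_zero.mp (by linarith : t * ‖δ‖^2 = 0)
      rcases this with h | h
      · exact absurd h (ne_of_gt htpos)
      · exact h
    exact hδ0 (norm_eq_zero.mp (by nlinarith))
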